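/- The map f : Z/(n+k) → Z/n given by f(i) = i mod n is a simplicial map from the clique complex of the 1-skeleton of N(n+k,k) to N(n,k): the image of any face of the clique complex Cl(N(n+k,k)^(1)) under f is a face of N(n,k). -/
import Mathlib


/-- The discrete circular arc `[i, i+k]ₙ ⊆ ℤ/n`. -/
def cyclicArc (n k : ℕ) (i : ZMod n) : Finset (ZMod n) :=
  (Finset.range (k + 1)).image (fun j : ℕ => i + (j : ZMod n))

/-- `σ` is a face of the nerve complex `N(n,k)`: it is contained in some cyclic
interval `[i, i+k]ₙ`. -/
def IsFaceN (n k : ℕ) (σ : Finset (ZMod n)) : Prop :=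
  ∃ i : ZMod n, σ ⊆ cyclicArc n k i


/-- reduction mod `n` is a simplicial map from the clique complex of the
1-skeleton of `N(n+k,k)` to `N(n,k)`: the image of any face of `Cl(N(n+k,k)⁽¹⁾)`
(a set of vertices pairwise lying on a common cyclic interval of length `k+1`)
is a face of `N(n,k)`. -/
theorem cliqueToNerve_simplicial (n k : ℕ) [NeZero n] (σ : Finset (ZMod (n + k)))
    (hσ : ∀ a ∈ σ, ∀ b ∈ σ, ∃ i : ZMod (n + k),
      a ∈ cyclicArc (n + k) k i ∧ b ∈ cyclicArc (n + k) k i) :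
    IsFaceN n k (σ.image (fun x : ZMod (n + k) => ((x.val : ℕ) : ZMod n))) := by
  have hn : 0 < n := Nat.pos_of_ne_zero (NeZero.ne n)
  haveI : NeZero (n + k) := ⟨by omega⟩
  rcases σ.eq_empty_or_nonempty with h | hne
  · subst h
    exact ⟨0, by simp⟩
  obtain ⟨a, ha, hmin⟩ := σ.exists_min_image (fun x => x.val) hne
  refine ⟨((a.val : ℕ) : ZMod n), ?_⟩
  intro y hy
  simp only [Finset.mem_image] at hy
  obtain ⟨x, hx, rfl⟩ := hy
  obtain ⟨c, hac, hxc⟩ := hσ a ha x hx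
  simp only [cyclicArc, Finset.mem_image, Finset.mem_range] at hac hxc ⊢
  obtain ⟨j1, hj1, hac⟩ := hac
  obtain ⟨j2, hj2, hxc⟩ := hxc
  have hav : a.val < n + k := a.val_lt
  have hxv : x.val < n + k := x.val_lt
  have hd : a.val ≤ x.val := hmin x hx
  rcases le_or_gt j1 j2 with hle | hlt
  · -- x = a + (j2 - j1)
    have hx_eq : x = a + ((j2 - j1 : ℕ) : ZMod (n + k)) := by
      rw [← hac, ← hxc]
      push_cast [Nat.cast_sub hle]
      ring
    have hval : x.val = (a.val + (j2 - j1) % (n + k)) % (n + k) := by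
      rw [hx_eq, ZMod.val_add, ZMod.val_natCast]
    have hval' : x.val = a.val + (j2 - j1) := by
      rw [Nat.mod_eq_of_lt (show j2 - j1 < n + k by omega)] at hval
      rcases Nat.lt_or_ge (a.val + (j2 - j1)) (n + k) with h | h
      · rw [Nat.mod_eq_of_lt h] at hval; omega
      · rw [Nat.mod_eq_sub_mod h, Nat.mod_eq_of_lt (by omega)] at hval
        omega
    refine ⟨j2 - j1, by omega, ?_⟩
    rw [hval']
    push_cast
    ring
  · -- a = x + (j1 - j2)
    have ha_eq : a = x + ((j1 - j2 : ℕ) : ZMod (n + k)) := by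
      rw [← hac, ← hxc]
      push_cast [Nat.cast_sub hlt.le]
      ring
    have hval : a.val = (x.val + (j1 - j2) % (n + k)) % (n + k) := by
      rw [ha_eq, ZMod.val_add, ZMod.val_natCast]
    have hval' : x.val = a.val + n + (k - (j1 - j2)) := by
      rw [Nat.mod_eq_of_lt (show j1 - j2 < n + k by omega)] at hval
      rcases Nat.lt_or_ge (x.val + (j1 - j2)) (n + k) with h | h
      · rw [Nat.mod_eq_of_lt h] at hval; omega
      · rw [Nat.mod_eq_sub_mod h, Nat.mod_eq_of_lt (by omega)] at hval
        omega
    refine ⟨k - (j1 - j2), by omega, ?_⟩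
    rw [hval']
    push_cast
    rw [ZMod.natCast_self]
    ring
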